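/- arXiv:2105.09797 — 4 statements merged into one kernel-verified Lean document; each statement's English description precedes it below -/
import Mathlib

section
/- If G is a well-dominated graph and M is any independent set of vertices in G, then the graph G - N[M] (obtained by deleting the closed neighborhood of M) is well-dominated. -/
open SimpleGraph

variable {V : Type*}

/-- Closed neighborhood of a vertex. -/
def closedNbhd (G : SimpleGraph V) (v : V) : Set V := insert v (G.neighborSet v)

/-- Closed neighborhood of a set of vertices. -/
def closedNbhdSet (G : SimpleGraph V) (A : Set V) : Set V := ⋃ a ∈ A, closedNbhd G a

/-- `D` is a dominating set of `G`. -/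
def IsDomSet (G : SimpleGraph V) (D : Set V) : Prop :=
  ∀ v, ∃ u ∈ D, v ∈ closedNbhd G u

/-- `D` is a minimal dominating set of `G`. -/
def IsMinimalDomSet (G : SimpleGraph V) (D : Set V) : Prop :=
  IsDomSet G D ∧ ∀ D' ⊆ D, IsDomSet G D' → D' = D

/-- The domination number `γ`. -/
noncomputable def domNum (G : SimpleGraph V) : ℕ :=
  sInf {n | ∃ D : Set V, IsDomSet G D ∧ D.ncard = n}

/-- The upper domination number `Γ`. -/
noncomputable def upperDomNum (G : SimpleGraph V) : ℕ :=
  sSup {n | ∃ D : Set V, IsMinimalDomSet G D ∧ D.ncard = n}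

/-- A graph is well-dominated if `γ = Γ`. -/
def WellDominated (G : SimpleGraph V) : Prop := domNum G = upperDomNum G

/-- `A` is an independent set of `G`. -/
def IsIndep (G : SimpleGraph V) (A : Set V) : Prop :=
  ∀ u ∈ A, ∀ v ∈ A, ¬ G.Adj u v

/-- `A` is a maximal independent set of `G`. -/
def IsMaxIndep (G : SimpleGraph V) (A : Set V) : Prop :=
  IsIndep G A ∧ ∀ B, IsIndep G B → A ⊆ B → B = A

/-- The independence number `α`. -/
noncomputable def indepNum (G : SimpleGraph V) : ℕ :=
  sSup {n | ∃ A : Set V, IsIndep G A ∧ A.ncard = n}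

/-- The strong product of two graphs. -/
def strongProd {α β : Type*} (G : SimpleGraph α) (H : SimpleGraph β) :
    SimpleGraph (α × β) where
  Adj x y := x ≠ y ∧ (x.1 = y.1 ∨ G.Adj x.1 y.1) ∧ (x.2 = y.2 ∨ H.Adj x.2 y.2)
  symm := by
    constructor
    rintro x y ⟨h1, h2, h3⟩
    refine ⟨h1.symm, ?_, ?_⟩
    · cases h2 with
      | inl h => exact Or.inl h.symm
      | inr h => exact Or.inr h.symm
    · cases h3 with
      | inl h => exact Or.inl h.symm
      | inr h => exact Or.inr h.symm
  loopless := by constructor; rintro x ⟨h1, _⟩; exact h1 rfl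

/-- The direct (tensor) product of two graphs. -/
def tensorProd {α β : Type*} (G : SimpleGraph α) (H : SimpleGraph β) :
    SimpleGraph (α × β) where
  Adj x y := G.Adj x.1 y.1 ∧ H.Adj x.2 y.2
  symm := ⟨fun _ _ h => ⟨h.1.symm, h.2.symm⟩⟩
  loopless := ⟨fun _ h => G.loopless.irrefl _ h.1⟩

/-- The corona `G ⊙ K₁`. -/
def corona {α : Type*} (G : SimpleGraph α) : SimpleGraph (α ⊕ α) :=
  SimpleGraph.fromRel (fun x y =>
    match x, y with
    | Sum.inl u, Sum.inl v => G.Adj u v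
    | Sum.inl u, Sum.inr v => u = v
    | _, _ => False)

/-- The private neighborhood `pn[u,D] = N[u] - N[D - {u}]`. -/
def privateNbhd (G : SimpleGraph V) (D : Set V) (u : V) : Set V :=
  {x | x ∈ closedNbhd G u ∧ ∀ d ∈ D, d ≠ u → x ∉ closedNbhd G d}

/-- A set `D` is open irredundant if every vertex of `D` has an external
private neighbor. -/
def IsOpenIrred (G : SimpleGraph V) (D : Set V) : Prop :=
  ∀ u ∈ D, ∃ x ∈ G.neighborSet u, ∀ d ∈ D, d ≠ u → x ∉ closedNbhd G d


section AuxWD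

variable {W : Type*}

lemma self_mem_closedNbhd (G : SimpleGraph W) (v : W) : v ∈ closedNbhd G v :=
  Set.mem_insert _ _

lemma mem_closedNbhd_iff {G : SimpleGraph W} {u v : W} :
    v ∈ closedNbhd G u ↔ v = u ∨ G.Adj u v := by
  simp [closedNbhd, SimpleGraph.mem_neighborSet]

lemma exists_minimal_dom [Finite W] (G : SimpleGraph W) (D : Set W) (hD : IsDomSet G D) :
    ∃ D', D' ⊆ D ∧ IsMinimalDomSet G D' := by
  obtain ⟨D', hD'mem, hmin⟩ := Set.Finite.exists_minimalFor id
    {E | E ⊆ D ∧ IsDomSet G E} (Set.toFinite _) ⟨D, Set.Subset.rfl, hD⟩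
  exact ⟨D', hD'mem.1, hD'mem.2, fun E hE hEdom =>
    Set.Subset.antisymm hE (hmin ⟨hE.trans hD'mem.1, hEdom⟩ hE)⟩

lemma minimal_card_eq [Finite W] (G : SimpleGraph W) (hG : WellDominated G)
    (D : Set W) (hD : IsMinimalDomSet G D) : D.ncard = domNum G := by
  have h1 : domNum G ≤ D.ncard := Nat.sInf_le ⟨D, hD.1, rfl⟩
  have h2 : D.ncard ≤ upperDomNum G := by
    refine le_csSup ⟨Nat.card W, ?_⟩ ⟨D, hD, rfl⟩
    rintro n ⟨E, _, rfl⟩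
    calc E.ncard ≤ (Set.univ : Set W).ncard := Set.ncard_le_ncard (Set.subset_univ E) (Set.toFinite _)
    _ = Nat.card W := Set.ncard_univ W
  rw [WellDominated] at hG
  omega

end AuxWD

section LiftWD

variable {V : Type*} {G : SimpleGraph V} {M : Set V}

lemma mem_closedNbhdSet_iff {v : V} :
    v ∈ closedNbhdSet G M ↔ ∃ a ∈ M, v ∈ closedNbhd G a := by
  simp [closedNbhdSet]

lemma induce_mem_closedNbhd_iff {u v : ((closedNbhdSet G M)ᶜ : Set V)} :
    v ∈ closedNbhd (G.induce (closedNbhdSet G M)ᶜ) u ↔ (v : V) ∈ closedNbhd G (u : V) := by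
  rw [mem_closedNbhd_iff, mem_closedNbhd_iff, Subtype.ext_iff]
  rfl

lemma lift_minimal (hM : IsIndep G M)
    (D : Set ((closedNbhdSet G M)ᶜ : Set V))
    (hD : IsMinimalDomSet (G.induce (closedNbhdSet G M)ᶜ) D) :
    IsMinimalDomSet G (M ∪ (Subtype.val '' D)) := by
  constructor
  · -- dominating
    intro v
    by_cases hv : v ∈ closedNbhdSet G M
    · obtain ⟨a, haM, hva⟩ := mem_closedNbhdSet_iff.mp hv
      exact ⟨a, Or.inl haM, hva⟩
    · obtain ⟨u, huD, hvu⟩ := hD.1 ⟨v, hv⟩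
      exact ⟨(u : V), Or.inr ⟨u, huD, rfl⟩, induce_mem_closedNbhd_iff.mp hvu⟩
  · -- minimality
    intro E hE hEdom
    have hME : M ⊆ E := by
      intro m hm
      obtain ⟨u, huE, hmu⟩ := hEdom m
      rcases hE huE with huM | ⟨d, hdD, rfl⟩
      · rcases mem_closedNbhd_iff.mp hmu with rfl | hadj
        · exact huE
        · exact absurd hadj (hM u huM m hm)
      · exfalso
        apply d.2
        rcases mem_closedNbhd_iff.mp hmu with heq | hadj
        · exact mem_closedNbhdSet_iff.mpr ⟨m, hm, mem_closedNbhd_iff.mpr (Or.inl heq.symm)⟩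
        · exact mem_closedNbhdSet_iff.mpr ⟨m, hm, mem_closedNbhd_iff.mpr (Or.inr hadj.symm)⟩
    have hDE : Subtype.val '' D ⊆ E := by
      set E' : Set ((closedNbhdSet G M)ᶜ : Set V) := {x | (x : V) ∈ E} with hE'
      have hE'sub : E' ⊆ D := by
        intro x hx
        rcases hE hx with hxM | ⟨d, hdD, hdx⟩
        · exact absurd (mem_closedNbhdSet_iff.mpr ⟨(x : V), hxM, self_mem_closedNbhd _ _⟩) x.2
        · rwa [← Subtype.val_injective hdx]
      have hE'dom : IsDomSet (G.induce (closedNbhdSet G M)ᶜ) E' := by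
        intro v
        obtain ⟨u, huE, hvu⟩ := hEdom (v : V)
        rcases hE huE with huM | ⟨d, hdD, rfl⟩
        · exfalso
          exact v.2 (mem_closedNbhdSet_iff.mpr ⟨u, huM, hvu⟩)
        · exact ⟨d, huE, induce_mem_closedNbhd_iff.mpr hvu⟩
      have := hD.2 E' hE'sub hE'dom
      rintro _ ⟨d, hdD, rfl⟩
      rw [← this] at hdD
      exact hdD
    exact Set.Subset.antisymm hE (Set.union_subset hME hDE)

lemma lift_card [Finite V] (D : Set ((closedNbhdSet G M)ᶜ : Set V)) :
    (M ∪ (Subtype.val '' D)).ncard = M.ncard + D.ncard := by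
  rw [Set.ncard_union_eq ?_ (Set.toFinite _) (Set.toFinite _),
    Set.ncard_image_of_injective _ Subtype.val_injective]
  rw [Set.disjoint_left]
  rintro x hxM ⟨d, _, rfl⟩
  exact d.2 (mem_closedNbhdSet_iff.mpr ⟨(d : V), hxM, self_mem_closedNbhd _ _⟩)

end LiftWD

/-- If `G` is well-dominated and `M` is an independent set, then `G - N[M]`
is well-dominated. -/
theorem stmt_0 {V : Type*} [Fintype V] (G : SimpleGraph V)
    (hG : WellDominated G) (M : Set V) (hM : IsIndep G M) :
    WellDominated (G.induce (closedNbhdSet G M)ᶜ) := by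
  classical
  set G' := G.induce (closedNbhdSet G M)ᶜ with hG'def
  have hunivdom : IsDomSet G' Set.univ := fun v => ⟨v, trivial, self_mem_closedNbhd _ _⟩
  obtain ⟨D0, -, hD0⟩ := exists_minimal_dom G' _ hunivdom
  set c := D0.ncard with hc
  have hsame : ∀ D, IsMinimalDomSet G' D → D.ncard = c := by
    intro D hD
    have h1 := minimal_card_eq G hG _ (lift_minimal hM D hD)
    have h2 := minimal_card_eq G hG _ (lift_minimal hM D0 hD0)
    rw [lift_card] at h1 h2
    omega
  have hdom : domNum G' = c := by
    refine le_antisymm (Nat.sInf_le ⟨D0, hD0.1, rfl⟩) (le_csInf ⟨c, D0, hD0.1, rfl⟩ ?_)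
    rintro n ⟨D, hDdom, rfl⟩
    obtain ⟨D', hsub, hmin⟩ := exists_minimal_dom G' D hDdom
    calc c = D'.ncard := (hsame D' hmin).symm
    _ ≤ D.ncard := Set.ncard_le_ncard hsub (Set.toFinite _)
  have hupper : upperDomNum G' = c := by
    have hset : {n | ∃ D, IsMinimalDomSet G' D ∧ D.ncard = n} = {c} := by
      ext n
      constructor
      · rintro ⟨D, hD, rfl⟩; exact hsame D hD
      · rintro rfl; exact ⟨D0, hD0, rfl⟩
    rw [upperDomNum, hset, csSup_singleton]
  rw [WellDominated, hdom, hupper]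
end

section
/- Let G and H be connected graphs each of order at least 3, and let D be a minimal dominating set of G. Then D × V(H) is a minimal dominating set of the direct product G × H if and only if D is an independent set in G. -/
open SimpleGraph

variable {V : Type*}

lemma mem_closedNbhd' {V : Type*} {G : SimpleGraph V} {u x : V} :
    x ∈ closedNbhd G u ↔ x = u ∨ G.Adj u x := by
  simp [closedNbhd, SimpleGraph.mem_neighborSet]

lemma exists_adj_of_conn {β : Type*} [Fintype β] (H : SimpleGraph β)
    (hH : H.Connected) (hb : 2 ≤ Fintype.card β) (y : β) : ∃ h, H.Adj h y := by
  obtain ⟨z, hz⟩ := Fintype.exists_ne_of_one_lt_card (by omega) y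
  obtain ⟨w⟩ := hH.preconnected y z
  cases w with
  | nil => exact absurd rfl hz.symm
  | cons h p => exact ⟨_, h.symm⟩

lemma walk_closed' {β : Type*} {H : SimpleGraph β} {S : Set β}
    (hS : ∀ s ∈ S, ∀ t, H.Adj s t → t ∈ S) {a b : β} (w : H.Walk a b)
    (ha : a ∈ S) : b ∈ S := by
  induction w with
  | nil => exact ha
  | cons h p ih => exact ih (hS _ ha _ h)

lemma exists_nonsupport {β : Type*} [Fintype β] (H : SimpleGraph β)
    (hH : H.Connected) (hb : 3 ≤ Fintype.card β) :
    ∃ h : β, ∀ y, H.Adj h y → ∃ h₁, h₁ ≠ h ∧ H.Adj h₁ y := by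
  classical
  by_contra hc
  push_neg at hc
  have hne : Nonempty β := Fintype.card_pos_iff.mp (by omega)
  obtain ⟨h₀⟩ := hne
  obtain ⟨y₀, hy₀adj, hy₀⟩ := hc h₀
  obtain ⟨z, hzadj, hz⟩ := hc y₀
  have hzh₀ : z = h₀ := by
    by_contra hne'
    exact hy₀ z hne' hzadj.symm
  rw [hzh₀] at hz
  -- neighbors of h₀ ⊆ {y₀}, neighbors of y₀ ⊆ {h₀}
  have hS : ∀ s ∈ ({h₀, y₀} : Set β), ∀ t, H.Adj s t → t ∈ ({h₀, y₀} : Set β) := by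
    rintro s (rfl | rfl) t hadj
    · by_cases ht : t = y₀
      · exact Or.inr ht
      · exact absurd hadj.symm (hz t ht)
    · by_cases ht : t = h₀
      · exact Or.inl ht
      · exact absurd hadj.symm (hy₀ t ht)
  have hall : ∀ b : β, b ∈ ({h₀, y₀} : Set β) := by
    intro b
    obtain ⟨w⟩ := hH.preconnected h₀ b
    exact walk_closed' hS w (Or.inl rfl)
  have hsub : (Finset.univ : Finset β) ⊆ {h₀, y₀} := by
    intro b _
    rcases hall b with rfl | rfl <;> simp
  have := Finset.card_le_card hsub
  have h2 : ({h₀, y₀} : Finset β).card ≤ 2 :=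
    (Finset.card_insert_le _ _).trans (by simp)
  simp only [Finset.card_univ] at this
  omega

/-- For connected graphs of order at least `3` and a minimal dominating set `D`
of `G`, the set `D × V(H)` is a minimal dominating set of `G × H` iff `D` is
independent in `G`. -/
theorem stmt_8 {α β : Type*} [Fintype α] [Fintype β]
    (G : SimpleGraph α) (H : SimpleGraph β)
    (hG : G.Connected) (hH : H.Connected)
    (hα : 3 ≤ Fintype.card α) (hβ : 3 ≤ Fintype.card β)
    (D : Set α) (hD : IsMinimalDomSet G D) :
    IsMinimalDomSet (tensorProd G H) (D ×ˢ (Set.univ : Set β)) ↔ IsIndep G D := by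
  have hβ2 : 2 ≤ Fintype.card β := by omega
  constructor
  · intro hmin u hu v hv huv
    obtain ⟨h, hns⟩ := exists_nonsupport H hH hβ
    have hdom' : IsDomSet (tensorProd G H)
        ((D ×ˢ (Set.univ : Set β)) \ {(u, h)}) := by
      rintro ⟨x, y⟩
      by_cases hx : x ∈ D
      · by_cases hxy : (x, y) = (u, h)
        · obtain ⟨h', hh'⟩ := exists_adj_of_conn H hH hβ2 h
          refine ⟨(v, h'), ⟨⟨hv, trivial⟩, ?_⟩, ?_⟩
          · intro hmem
            apply huv.ne'
            have : (v, h') = (u, h) := hmem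
            exact (Prod.mk.injEq _ _ _ _ ▸ this).1
          · cases hxy
            exact mem_closedNbhd'.mpr (Or.inr ⟨huv.symm, hh'⟩)
        · exact ⟨(x, y), ⟨⟨hx, trivial⟩, hxy⟩, mem_closedNbhd'.mpr (Or.inl rfl)⟩
      · obtain ⟨d, hd, hdx⟩ := hD.1 x
        have hadj : G.Adj d x := by
          rcases mem_closedNbhd'.mp hdx with rfl | hA
          · exact absurd hd hx
          · exact hA
        obtain ⟨h₀, hh₀⟩ := exists_adj_of_conn H hH hβ2 y
        by_cases hdh : (d, h₀) = (u, h)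
        · have hhy : H.Adj h y := by
            have := (Prod.mk.injEq _ _ _ _ ▸ hdh).2
            exact this ▸ hh₀
          obtain ⟨h₁, hne₁, hh₁⟩ := hns y hhy
          refine ⟨(d, h₁), ⟨⟨hd, trivial⟩, ?_⟩, mem_closedNbhd'.mpr (Or.inr ⟨hadj, hh₁⟩)⟩
          intro hmem
          have : (d, h₁) = (u, h) := hmem
          exact hne₁ (Prod.mk.injEq _ _ _ _ ▸ this).2
        · exact ⟨(d, h₀), ⟨⟨hd, trivial⟩, hdh⟩, mem_closedNbhd'.mpr (Or.inr ⟨hadj, hh₀⟩)⟩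
    have heq := hmin.2 _ Set.diff_subset hdom'
    have hmem : (u, h) ∈ (D ×ˢ (Set.univ : Set β)) \ {(u, h)} := by
      rw [heq]; exact ⟨hu, trivial⟩
    exact hmem.2 rfl
  · intro hind
    constructor
    · rintro ⟨x, y⟩
      by_cases hx : x ∈ D
      · exact ⟨(x, y), ⟨hx, trivial⟩, mem_closedNbhd'.mpr (Or.inl rfl)⟩
      · obtain ⟨d, hd, hdx⟩ := hD.1 x
        have hadj : G.Adj d x := by
          rcases mem_closedNbhd'.mp hdx with rfl | hA
          · exact absurd hd hx
          · exact hA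
        obtain ⟨h₀, hh₀⟩ := exists_adj_of_conn H hH hβ2 y
        exact ⟨(d, h₀), ⟨hd, trivial⟩, mem_closedNbhd'.mpr (Or.inr ⟨hadj, hh₀⟩)⟩
    · intro D' hsub hdom'
      apply Set.Subset.antisymm hsub
      rintro ⟨u, h⟩ ⟨hu, -⟩
      obtain ⟨⟨d, h'⟩, hdmem, hnb⟩ := hdom' (u, h)
      rcases mem_closedNbhd'.mp hnb with heq | hadj
      · rw [heq]; exact hdmem
      · exact absurd hadj.1 (hind d (hsub hdmem).1 u hu)
end

section
/- For any connected graph F, the direct product (F ⊙ K₁) × K₂ is isomorphic to (F × K₂) ⊙ K₁, where ⊙ denotes the corona and × the direct product. -/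
open SimpleGraph

variable {V : Type*}

/-- For a connected graph `F`, `(F ⊙ K₁) × K₂ ≅ (F × K₂) ⊙ K₁`. -/
theorem stmt_10 {α : Type*} (F : SimpleGraph α) (hF : F.Connected) :
    Nonempty ((tensorProd (corona F) (⊤ : SimpleGraph (Fin 2))) ≃g
      corona (tensorProd F (⊤ : SimpleGraph (Fin 2)))) := by
  refine ⟨⟨⟨fun p => match p with
      | (Sum.inl u, i) => Sum.inl (u, i)
      | (Sum.inr u, i) => Sum.inr (u, i + 1),
    fun q => match q with
      | Sum.inl (u, i) => (Sum.inl u, i)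
      | Sum.inr (u, i) => (Sum.inr u, i + 1), ?_, ?_⟩, ?_⟩⟩
  · rintro ⟨(u | u), i⟩ <;> fin_cases i <;> rfl
  · rintro (⟨u, i⟩ | ⟨u, i⟩) <;> fin_cases i <;> rfl
  · rintro ⟨(u | u), i⟩ ⟨(v | v), j⟩ <;>
      simp [tensorProd, corona, SimpleGraph.fromRel_adj] <;>
      fin_cases i <;> fin_cases j <;>
      simp +decide [and_comm, eq_comm, adj_comm] <;>
      exact fun h => F.ne_of_adj h
end

section
/- If a nontrivial connected graph G has a minimum dominating set D containing a vertex u with pn[u,D] = {u}, then G □ H is not well-dominated for every nontrivial connected graph H. -/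
open SimpleGraph

variable {V : Type*}

section AuxStmt15

lemma aux15_mem_closedNbhd_self (G : SimpleGraph V) (v : V) : v ∈ closedNbhd G v :=
  Set.mem_insert _ _

lemma aux15_mem_closedNbhd_iff {G : SimpleGraph V} {u v : V} :
    v ∈ closedNbhd G u ↔ v = u ∨ G.Adj u v := by
  simp [closedNbhd]

lemma aux15_isDomSet_univ (G : SimpleGraph V) : IsDomSet G Set.univ :=
  fun v => ⟨v, Set.mem_univ v, aux15_mem_closedNbhd_self G v⟩

lemma aux15_domNum_le {G : SimpleGraph V} {D : Set V} (hD : IsDomSet G D) :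
    domNum G ≤ D.ncard :=
  Nat.sInf_le ⟨D, hD, rfl⟩

lemma aux15_exists_gamma_set (G : SimpleGraph V) :
    ∃ D : Set V, IsDomSet G D ∧ D.ncard = domNum G := by
  have h : domNum G ∈ {n | ∃ D : Set V, IsDomSet G D ∧ D.ncard = n} :=
    Nat.sInf_mem ⟨(Set.univ : Set V).ncard, Set.univ, aux15_isDomSet_univ G, rfl⟩
  exact h

lemma aux15_exists_adj_of_connected {G : SimpleGraph V} [Fintype V]
    (hG : G.Connected) (hcard : 2 ≤ Fintype.card V) (v : V) :
    ∃ w, G.Adj v w := by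
  obtain ⟨y, hy⟩ := Fintype.exists_ne_of_one_lt_card (by omega) v
  obtain ⟨p⟩ := hG.preconnected v y
  cases p with
  | nil => exact absurd rfl hy.symm
  | cons h _ => exact ⟨_, h⟩

noncomputable def aux15_pairCount (G : SimpleGraph V) (X : Set V) : ℕ :=
  {p : V × V | p.1 ∈ X ∧ p.2 ∈ X ∧ G.Adj p.1 p.2}.ncard

/-- Bollobás–Cockayne: a minimum dominating set in which every vertex has an
external private neighbor. -/
lemma aux15_exists_good_gamma_set (G : SimpleGraph V) [Fintype V]
    (hG : G.Connected) (hcard : 2 ≤ Fintype.card V) :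
    ∃ B : Set V, IsDomSet G B ∧ B.ncard = domNum G ∧
      ∀ b ∈ B, ∃ x, G.Adj b x ∧ ∀ b' ∈ B, b' ≠ b → x ∉ closedNbhd G b' := by
  classical
  set T : Set ℕ :=
    {n | ∃ X : Set V, (IsDomSet G X ∧ X.ncard = domNum G) ∧ aux15_pairCount G X = n} with hT
  have hTne : T.Nonempty := by
    obtain ⟨D, hD, hDc⟩ := aux15_exists_gamma_set G
    exact ⟨aux15_pairCount G D, D, ⟨hD, hDc⟩, rfl⟩
  have hTbdd : BddAbove T := by
    refine ⟨Fintype.card (V × V), ?_⟩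
    rintro n ⟨X, -, rfl⟩
    calc aux15_pairCount G X ≤ (Set.univ : Set (V × V)).ncard :=
          Set.ncard_le_ncard (Set.subset_univ _) (Set.toFinite _)
      _ = Fintype.card (V × V) := by
          rw [Set.ncard_univ, Nat.card_eq_fintype_card]
  obtain ⟨X, ⟨hXdom, hXc⟩, hXmax⟩ := Nat.sSup_mem hTne hTbdd
  refine ⟨X, hXdom, hXc, ?_⟩
  by_contra hbad
  push_neg at hbad
  obtain ⟨b, hbX, hb⟩ := hbad
  have hb' : ∀ x, G.Adj b x → ∃ b' ∈ X, b' ≠ b ∧ x ∈ closedNbhd G b' := by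
    intro x hx
    obtain ⟨b', hb'X, hb'⟩ := hb x hx
    exact ⟨b', hb'X, hb'⟩
  have hpos : 1 ≤ domNum G := by
    rw [← hXc]
    exact Set.ncard_pos (Set.toFinite _) |>.2 ⟨b, hbX⟩
  have hbiso : ∀ b' ∈ X, b' ≠ b → b ∉ closedNbhd G b' := by
    intro b0 hb0X hb0ne hbmem
    have hdom' : IsDomSet G (X \ {b}) := by
      intro v
      obtain ⟨d, hdX, hvd⟩ := hXdom v
      by_cases hdb : d = b
      · subst hdb
        rcases aux15_mem_closedNbhd_iff.1 hvd with rfl | hadj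
        · exact ⟨b0, ⟨hb0X, hb0ne⟩, hbmem⟩
        · obtain ⟨b', hb'X, hb'ne, hb'mem⟩ := hb' v hadj
          exact ⟨b', ⟨hb'X, hb'ne⟩, hb'mem⟩
      · exact ⟨d, ⟨hdX, hdb⟩, hvd⟩
    have := aux15_domNum_le hdom'
    rw [Set.ncard_diff_singleton_of_mem hbX, hXc] at this
    omega
  obtain ⟨w, hw⟩ := aux15_exists_adj_of_connected hG hcard b
  have hwX : w ∉ X := by
    intro hwX
    exact hbiso w hwX (fun h => G.irrefl (h ▸ hw)) (aux15_mem_closedNbhd_iff.2 (Or.inr hw.symm))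
  set X' : Set V := insert w (X \ {b}) with hX'
  have hX'dom : IsDomSet G X' := by
    intro v
    obtain ⟨d, hdX, hvd⟩ := hXdom v
    by_cases hdb : d = b
    · subst hdb
      rcases aux15_mem_closedNbhd_iff.1 hvd with rfl | hadj
      · exact ⟨w, Set.mem_insert _ _, aux15_mem_closedNbhd_iff.2 (Or.inr hw.symm)⟩
      · obtain ⟨b', hb'X, hb'ne, hb'mem⟩ := hb' v hadj
        exact ⟨b', Set.mem_insert_of_mem _ ⟨hb'X, hb'ne⟩, hb'mem⟩
    · exact ⟨d, Set.mem_insert_of_mem _ ⟨hdX, hdb⟩, hvd⟩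
  have hX'c : X'.ncard = domNum G := by
    rw [hX', Set.ncard_insert_of_notMem (fun h => hwX h.1) (Set.toFinite _),
      Set.ncard_diff_singleton_of_mem hbX, hXc]
    omega
  obtain ⟨y₀, hy₀X, hy₀ne, hy₀mem⟩ := hb' w hw
  have hwy : G.Adj w y₀ := by
    rcases aux15_mem_closedNbhd_iff.1 hy₀mem with rfl | hadj
    · exact absurd hy₀X hwX
    · exact hadj.symm
  have hsub : {p : V × V | p.1 ∈ X ∧ p.2 ∈ X ∧ G.Adj p.1 p.2} ⊂
      {p : V × V | p.1 ∈ X' ∧ p.2 ∈ X' ∧ G.Adj p.1 p.2} := by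
    constructor
    · rintro ⟨p₁, p₂⟩ ⟨h1, h2, hadj⟩
      have h1b : p₁ ≠ b := by
        rintro rfl
        exact hbiso p₂ h2 (fun h => G.irrefl (h ▸ hadj))
          (aux15_mem_closedNbhd_iff.2 (Or.inr hadj.symm))
      have h2b : p₂ ≠ b := by
        rintro rfl
        exact hbiso p₁ h1 h1b (aux15_mem_closedNbhd_iff.2 (Or.inr hadj))
      exact ⟨Set.mem_insert_of_mem _ ⟨h1, h1b⟩, Set.mem_insert_of_mem _ ⟨h2, h2b⟩, hadj⟩
    · intro hcon
      have : ((w, y₀) : V × V) ∈ {p : V × V | p.1 ∈ X ∧ p.2 ∈ X ∧ G.Adj p.1 p.2} :=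
        hcon ⟨Set.mem_insert _ _, Set.mem_insert_of_mem _ ⟨hy₀X, hy₀ne⟩, hwy⟩
      exact hwX this.1
  have hlt : aux15_pairCount G X < aux15_pairCount G X' :=
    Set.ncard_lt_ncard hsub (Set.toFinite _)
  have hmem : aux15_pairCount G X' ∈ T := ⟨X', ⟨hX'dom, hX'c⟩, rfl⟩
  have : aux15_pairCount G X' ≤ aux15_pairCount G X := hXmax ▸ le_csSup hTbdd hmem
  omega

lemma aux15_ncard_prod {α β : Type*} (s : Set α) (t : Set β) :
    (s ×ˢ t).ncard = s.ncard * t.ncard := by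
  rw [← Nat.card_coe_set_eq, ← Nat.card_coe_set_eq, ← Nat.card_coe_set_eq,
    Nat.card_congr (Equiv.Set.prod s t), Nat.card_prod]

end AuxStmt15

/-- If a nontrivial connected graph `G` has a minimum dominating set `D`
containing a vertex `u` with `pn[u,D] = {u}`, then `G □ H` is not
well-dominated for every nontrivial connected graph `H`. -/
theorem stmt_15 {α β : Type*} [Fintype α] [Fintype β]
    (G : SimpleGraph α) (H : SimpleGraph β)
    (hG : G.Connected) (hα : 2 ≤ Fintype.card α)
    (hH : H.Connected) (hβ : 2 ≤ Fintype.card β)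
    (D : Set α) (hD : IsDomSet G D) (hmin : D.ncard = domNum G)
    (u : α) (hu : u ∈ D) (hpn : privateNbhd G D u = {u}) :
    ¬ WellDominated (G □ H) := by
  classical
  -- an edge h₁h₂ of H
  have hβne : Nonempty β := Fintype.card_pos_iff.1 (by omega)
  obtain ⟨h₁⟩ := hβne
  obtain ⟨h₂, hH12⟩ := aux15_exists_adj_of_connected hH hβ h₁
  -- every vertex other than u is dominated by D \ {u}
  have hfact1 : ∀ x : α, x ≠ u → ∃ d ∈ D, d ≠ u ∧ x ∈ closedNbhd G d := by
    intro x hxu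
    obtain ⟨d, hdD, hxd⟩ := hD x
    by_cases hdu : d = u
    · subst hdu
      have hxnot : ¬ (x ∈ closedNbhd G d ∧ ∀ d' ∈ D, d' ≠ d → x ∉ closedNbhd G d') := by
        intro hcontra
        have hxpn : x ∈ privateNbhd G D d := hcontra
        rw [hpn] at hxpn
        exact hxu hxpn
      push_neg at hxnot
      obtain ⟨d', hd'D, hd'ne, hd'mem⟩ := hxnot hxd
      exact ⟨d', hd'D, hd'ne, hd'mem⟩
    · exact ⟨d, hdD, hdu, hxd⟩
  set g : ℕ := domNum G with hg
  set n : ℕ := Fintype.card β with hn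
  have hDfin : D.Finite := Set.toFinite _
  have hgpos : 1 ≤ g := by
    rw [← hmin]
    exact Set.ncard_pos hDfin |>.2 ⟨u, hu⟩
  -- the small dominating set S
  set S : Set (α × β) :=
    ((D \ {u}) ×ˢ (Set.univ : Set β)) ∪ ({u} ×ˢ ((Set.univ : Set β) \ {h₁})) with hS
  have hSdom : IsDomSet (G □ H) S := by
    rintro ⟨x, h⟩
    by_cases hxu : x = u
    · by_cases hh : h = h₁
      · refine ⟨(u, h₂), Or.inr ⟨rfl, Set.mem_univ _, hH12.ne'⟩, ?_⟩
        refine Set.mem_insert_of_mem _ ?_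
        show (G □ H).Adj (u, h₂) (x, h)
        refine SimpleGraph.boxProd_adj.2 (Or.inr ⟨?_, ?_⟩)
        · show H.Adj h₂ h
          rw [hh]; exact hH12.symm
        · show u = x
          rw [hxu]
      · refine ⟨(u, h), Or.inr ⟨rfl, Set.mem_univ _, hh⟩, ?_⟩
        rw [hxu]
        exact Set.mem_insert _ _
    · obtain ⟨d, hdD, hdu, hxd⟩ := hfact1 x hxu
      refine ⟨(d, h), Or.inl ⟨⟨hdD, hdu⟩, Set.mem_univ _⟩, ?_⟩
      rcases aux15_mem_closedNbhd_iff.1 hxd with rfl | hadj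
      · exact Set.mem_insert _ _
      · exact Set.mem_insert_of_mem _ (by
          show (G □ H).Adj (d, h) (x, h)
          exact SimpleGraph.boxProd_adj.2 (Or.inl ⟨hadj, rfl⟩))
  have hScard : S.ncard = (g - 1) * n + (n - 1) := by
    rw [hS, Set.ncard_union_eq ?_ (Set.toFinite _) (Set.toFinite _)]
    · rw [aux15_ncard_prod, aux15_ncard_prod, Set.ncard_diff_singleton_of_mem hu,
        Set.ncard_univ, Nat.card_eq_fintype_card, Set.ncard_singleton,
        Set.ncard_diff_singleton_of_mem (Set.mem_univ _), Set.ncard_univ,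
        Nat.card_eq_fintype_card, hmin, one_mul]
    · rw [Set.disjoint_left]
      rintro ⟨a, b⟩ ⟨⟨haD, hau⟩, -⟩ ⟨ha, -⟩
      exact hau ha
  -- the large minimal dominating set M = B ×ˢ univ
  obtain ⟨B, hBdom, hBcard, hBepn⟩ := aux15_exists_good_gamma_set G hG hα
  set M : Set (α × β) := B ×ˢ (Set.univ : Set β) with hM
  have hMdom : IsDomSet (G □ H) M := by
    rintro ⟨x, h⟩
    obtain ⟨b, hbB, hxb⟩ := hBdom x
    refine ⟨(b, h), ⟨hbB, Set.mem_univ _⟩, ?_⟩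
    rcases aux15_mem_closedNbhd_iff.1 hxb with rfl | hadj
    · exact Set.mem_insert _ _
    · exact Set.mem_insert_of_mem _ (by
        show (G □ H).Adj (b, h) (x, h)
        exact SimpleGraph.boxProd_adj.2 (Or.inl ⟨hadj, rfl⟩))
  have hMmin : IsMinimalDomSet (G □ H) M := by
    refine ⟨hMdom, fun M' hsub hM'dom => ?_⟩
    refine Set.Subset.antisymm hsub fun m hmem => ?_
    obtain ⟨b, h⟩ := m
    have hbB : b ∈ B := hmem.1
    by_contra hnot
    obtain ⟨x, hbx, hxpriv⟩ := hBepn b hbB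
    have hxB : x ∉ B := by
      intro hxB
      exact hxpriv x hxB (fun hh => G.irrefl (hh ▸ hbx)) (aux15_mem_closedNbhd_self G x)
    obtain ⟨m', hm'M', hzmem⟩ := hM'dom (x, h)
    have hm'M : m' ∈ M := hsub hm'M'
    obtain ⟨b₂, h₂'⟩ := m'
    have hb₂B : b₂ ∈ B := hm'M.1
    rcases aux15_mem_closedNbhd_iff.1 hzmem with heq | hadj
    · -- (x,h) = (b₂,h₂') : x ∈ B, contradiction
      have : b₂ = x := congrArg Prod.fst heq.symm
      exact hxB (this ▸ hb₂B)
    · rcases SimpleGraph.boxProd_adj.1 hadj with ⟨hgadj, hsnd⟩ | ⟨hhadj, hfst⟩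
      · -- G.Adj b₂ x with same snd
        have hb₂b : b₂ = b := by
          by_contra hne
          exact hxpriv b₂ hb₂B hne (aux15_mem_closedNbhd_iff.2 (Or.inr hgadj))
        have : (b₂, h₂') = ((b, h) : α × β) := by
          simp only [Prod.mk.injEq]
          exact ⟨hb₂b, hsnd⟩
        exact hnot (this ▸ hm'M')
      · -- b₂ = x : x ∈ B, contradiction
        have hb2x : b₂ = x := hfst
        exact hxB (hb2x ▸ hb₂B)
  have hMcard : M.ncard = g * n := by
    rw [hM, aux15_ncard_prod, hBcard, Set.ncard_univ, Nat.card_eq_fintype_card]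
  -- assemble
  have hdle : domNum (G □ H) ≤ S.ncard := aux15_domNum_le hSdom
  have hbdd : BddAbove {k | ∃ E : Set (α × β), IsMinimalDomSet (G □ H) E ∧ E.ncard = k} := by
    refine ⟨Fintype.card (α × β), ?_⟩
    rintro k ⟨E, -, rfl⟩
    calc E.ncard ≤ (Set.univ : Set (α × β)).ncard :=
          Set.ncard_le_ncard (Set.subset_univ _) (Set.toFinite _)
      _ = Fintype.card (α × β) := by rw [Set.ncard_univ, Nat.card_eq_fintype_card]
  have hMle : M.ncard ≤ upperDomNum (G □ H) := le_csSup hbdd ⟨M, hMmin, rfl⟩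
  have hkey : (g - 1) * n + (n - 1) < g * n := by
    have h1 : (g - 1) * n + (n - 1) + 1 = g * n := by
      have hn1 : n - 1 + 1 = n := by omega
      have hg1 : g - 1 + 1 = g := by omega
      calc (g - 1) * n + (n - 1) + 1 = (g - 1) * n + ((n - 1) + 1) := by
            rw [add_assoc]
        _ = (g - 1) * n + n := by rw [hn1]
        _ = ((g - 1) + 1) * n := by rw [add_mul, one_mul]
        _ = g * n := by rw [hg1]
    exact h1 ▸ Nat.lt_succ_self _
  intro hwd
  rw [WellDominated] at hwd
  have hlt : domNum (G □ H) < upperDomNum (G □ H) :=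
    lt_of_le_of_lt (hScard ▸ hdle) (lt_of_lt_of_le hkey (hMcard ▸ hMle))
  exact (Nat.ne_of_lt hlt) hwd
end
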